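/- Let F be a field, a ∈ F an element of multiplicative order ℓ (a^ℓ = 1 and a^j ≠ 1 for all 0 < j < ℓ), t a natural number, and P ∈ F[X,Y] (a bivariate polynomial, MvPolynomial over Fin 2) homogeneous of degree t·ℓ. If P(aX, Y) = P(X, Y), i.e. substituting a·X for X leaves P unchanged, then there exists a bivariate polynomial R ∈ F[X,Y], homogeneous of degree t, such that P(X,Y) = R(X^ℓ, Y^ℓ). -/
import Mathlib


open MvPolynomial

/-- If a bivariate homogeneous polynomial `P` of degree `t·ℓ` satisfies
`P(aX, Y) = P(X, Y)` where `a` has multiplicative order `ℓ`, then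
`P(X, Y) = R(X^ℓ, Y^ℓ)` for some homogeneous `R` of degree `t`. -/
theorem homogeneous_invariant_eq_comp_pow {F : Type*} [Field F] (a : F)
    (ℓ : ℕ) (hℓ : 0 < ℓ) (ha1 : a ^ ℓ = 1)
    (ha2 : ∀ j : ℕ, 0 < j → j < ℓ → a ^ j ≠ 1)
    (t : ℕ) (P : MvPolynomial (Fin 2) F) (hP : P.IsHomogeneous (t * ℓ))
    (hinv : aeval ![C a * X 0, X 1] P = P) :
    ∃ R : MvPolynomial (Fin 2) F, R.IsHomogeneous t ∧
      P = aeval ![X 0 ^ ℓ, X 1 ^ ℓ] R := by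
  -- order divisibility
  have horder : ∀ n : ℕ, a ^ n = 1 → ℓ ∣ n := by
    intro n hn
    have hr : a ^ (n % ℓ) = 1 := by
      have h' : a ^ n = a ^ (n % ℓ) := by
        conv_lhs => rw [← Nat.div_add_mod n ℓ]
        rw [pow_add, pow_mul, ha1, one_pow, one_mul]
      rw [← h', hn]
    have : n % ℓ = 0 := by
      by_contra h
      exact ha2 (n % ℓ) (Nat.pos_of_ne_zero h) (Nat.mod_lt _ hℓ) hr
    exact Nat.dvd_of_mod_eq_zero this
  -- action on monomials
  have hterm : ∀ (e : Fin 2 →₀ ℕ) (c : F),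
      aeval ![C a * X 0, X 1] (monomial e c) = monomial e (a ^ (e 0) * c) := by
    intro e c
    rw [aeval_monomial, Finsupp.prod_fintype _ _ (fun i => pow_zero _),
      Fin.prod_univ_two, monomial_eq,
      Finsupp.prod_fintype _ _ (fun i => pow_zero _), Fin.prod_univ_two]
    simp only [Matrix.cons_val_zero, Matrix.cons_val_one, Matrix.head_cons,
      mul_pow, ← C_pow, algebraMap_eq, map_mul]
    ring
  have key : ∀ d : Fin 2 →₀ ℕ, a ^ (d 0) * coeff d P = coeff d P := by
    intro d
    by_cases hd : d ∈ P.support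
    · conv_rhs => rw [← hinv]
      conv_rhs => rw [P.as_sum, map_sum]
      rw [coeff_sum]
      rw [Finset.sum_eq_single d]
      · rw [hterm, coeff_monomial, if_pos rfl]
      · intro e he hne
        rw [hterm, coeff_monomial, if_neg hne]
      · intro h; exact absurd hd h
    · rw [notMem_support_iff.mp hd, mul_zero]
  have hdvd : ∀ d ∈ P.support, ℓ ∣ d 0 ∧ ℓ ∣ d 1 := by
    intro d hd
    have hc : coeff d P ≠ 0 := mem_support_iff.mp hd
    have h1 : a ^ (d 0) = 1 := by
      have hz : (a ^ (d 0) - 1) * coeff d P = 0 := by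
        rw [sub_mul, one_mul, key d, sub_self]
      rcases mul_eq_zero.mp hz with h | h
      · exact sub_eq_zero.mp h
      · exact absurd h hc
    have hdvd0 : ℓ ∣ d 0 := horder _ h1
    have hdeg : d 0 + d 1 = t * ℓ := by
      have h2 := hP hc
      rw [show t * ℓ = ((Finsupp.weight 1) d : ℕ) from h2.symm]
      simp [Finsupp.weight_apply, Finsupp.sum_fintype, Fin.sum_univ_two]
    refine ⟨hdvd0, ?_⟩
    have : ℓ ∣ d 0 + d 1 := by rw [hdeg]; exact Dvd.intro_left t rfl
    exact (Nat.dvd_add_right hdvd0).mp this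
  -- construct R
  set q : (Fin 2 →₀ ℕ) → (Fin 2 →₀ ℕ) := fun d => d.mapRange (· / ℓ) (Nat.zero_div ℓ) with hq
  refine ⟨∑ d ∈ P.support, monomial (q d) (coeff d P), ?_, ?_⟩
  · apply IsHomogeneous.sum
    intro d hd
    apply isHomogeneous_monomial
    obtain ⟨⟨u, hu⟩, ⟨v, hv⟩⟩ := hdvd d hd
    have hdeg : d 0 + d 1 = t * ℓ := by
      have h2 := hP (mem_support_iff.mp hd)
      rw [show t * ℓ = ((Finsupp.weight 1) d : ℕ) from h2.symm]
      simp [Finsupp.weight_apply, Finsupp.sum_fintype, Fin.sum_univ_two]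
    have : (q d).degree = (q d) 0 + (q d) 1 := by
      simp [Finsupp.degree_eq_weight_one, Finsupp.weight_apply, Finsupp.sum_fintype,
        Fin.sum_univ_two]
    rw [this, hq]
    simp only [Finsupp.mapRange_apply]
    rw [hu, hv, Nat.mul_div_cancel_left _ hℓ, Nat.mul_div_cancel_left _ hℓ]
    have : ℓ * u + ℓ * v = t * ℓ := by rw [← hu, ← hv, hdeg]
    have h3 : ℓ * (u + v) = ℓ * t := by rw [Nat.mul_add, this, Nat.mul_comm]
    exact Nat.eq_of_mul_eq_mul_left hℓ h3
  · conv_lhs => rw [P.as_sum]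
    rw [map_sum]
    apply Finset.sum_congr rfl
    intro d hd
    obtain ⟨hd0, hd1⟩ := hdvd d hd
    rw [aeval_monomial, Finsupp.prod_fintype _ _ (fun i => pow_zero _),
      Fin.prod_univ_two, monomial_eq,
      Finsupp.prod_fintype _ _ (fun i => pow_zero _), Fin.prod_univ_two]
    simp only [Matrix.cons_val_zero, Matrix.cons_val_one, Matrix.head_cons,
      algebraMap_eq, hq, Finsupp.mapRange_apply, ← pow_mul]
    rw [Nat.mul_div_cancel' hd0, Nat.mul_div_cancel' hd1]
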